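/- For k ≥ 0 and n ≥ 1, the complex vector space of matrices f : (Fin k → Fin n) × (Fin k → Fin n) → ℂ satisfying f(σ ∘ I, σ ∘ J) = f(I, J) for all σ ∈ S_n — i.e. the space End_{S_n}(M_n^{⊗k}) of S_n-equivariant linear endomorphisms of M_n^{⊗k} written in the standard basis — has dimension equal to Bell(2k, n), the number of set partitions of a 2k-element set into at most n blocks. -/

import Mathlib

noncomputable section

/-- `Bell m n`: the number of set partitions of `Fin m` (encoded as setoids,
i.e. equivalence relations) into at most `n` blocks. -/
def Bell (m n : ℕ) : ℕ :=
  Nat.card {π : Setoid (Fin m) // Nat.card (Quotient π) ≤ n}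

/-- The space `End_{S_n}(M_n^{⊗k})` in the standard basis: matrices
`f : (Fin k → Fin n) × (Fin k → Fin n) → ℂ` with `f (σ ∘ I, σ ∘ J) = f (I, J)`
for all `σ ∈ S_n`. -/
def MEnd (n k : ℕ) : Submodule ℂ ((Fin k → Fin n) × (Fin k → Fin n) → ℂ) where
  carrier := {f | ∀ (σ : Equiv.Perm (Fin n)) (I J : Fin k → Fin n),
    f (⇑σ ∘ I, ⇑σ ∘ J) = f (I, J)}
  add_mem' := by
    intro a b ha hb σ I J
    simp only [Pi.add_apply, ha σ I J, hb σ I J]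
  zero_mem' := by intro σ I J; rfl
  smul_mem' := by
    intro c a ha σ I J
    simp only [Pi.smul_apply, ha σ I J]

namespace BellAux

variable {m n k : ℕ}

theorem ker_card_le (a : Fin m → Fin n) : Nat.card (Quotient (Setoid.ker a)) ≤ n := by
  have := Nat.card_le_card_of_injective _
    ((Setoid.quotientKerEquivRange a).toEmbedding.trans (Function.Embedding.subtype _)).injective
  simpa using this

theorem exists_perm_iff (a b : Fin m → Fin n) :
    (∃ σ : Equiv.Perm (Fin n), ⇑σ ∘ a = b) ↔ Setoid.ker a = Setoid.ker b := by
  constructor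
  · rintro ⟨σ, rfl⟩
    ext x y
    simp [Setoid.ker, Function.onFun, σ.injective.eq_iff]
  · intro h
    classical
    let e : {x // x ∈ Set.range a} ≃ {x // x ∈ Set.range b} :=
      (Setoid.quotientKerEquivRange a).symm.trans
        ((Quotient.congrRight (fun x y => by rw [h])).trans (Setoid.quotientKerEquivRange b))
    refine ⟨e.extendSubtype, funext fun x => ?_⟩
    have hx : a x ∈ Set.range a := ⟨x, rfl⟩
    rw [Function.comp_apply, Equiv.extendSubtype_apply_of_mem e _ hx]
    have h1 : (Setoid.quotientKerEquivRange a).symm ⟨a x, hx⟩ = Quotient.mk _ x := by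
      rw [Equiv.symm_apply_eq]; rfl
    have h2 : e ⟨a x, hx⟩ = ⟨b x, ⟨x, rfl⟩⟩ := by
      simp only [e, Equiv.trans_apply, h1]; rfl
    rw [h2]

theorem exists_ker_eq (π : Setoid (Fin m)) (hπ : Nat.card (Quotient π) ≤ n) :
    ∃ a : Fin m → Fin n, Setoid.ker a = π := by
  classical
  have : Fintype (Quotient π) := Fintype.ofFinite _
  rw [Nat.card_eq_fintype_card] at hπ
  obtain ⟨g⟩ : Nonempty (Quotient π ↪ Fin n) :=
    Function.Embedding.nonempty_of_card_le (by simpa using hπ)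
  refine ⟨fun x => g (Quotient.mk π x), ?_⟩
  ext x y
  simp [Setoid.ker, Function.onFun, g.injective.eq_iff]
  exact Quotient.eq

/-- Orbit setoid on functions `Fin m → Fin n` under postcomposition by permutations. -/
def orbS (n m : ℕ) : Setoid (Fin m → Fin n) where
  r a b := ∃ σ : Equiv.Perm (Fin n), ⇑σ ∘ a = b
  iseqv := ⟨fun a => ⟨1, by simp⟩,
    by rintro a b ⟨σ, rfl⟩; exact ⟨σ⁻¹, by funext x; simp⟩,
    by rintro a b c ⟨σ, rfl⟩ ⟨τ, rfl⟩; exact ⟨τ * σ, by funext x; simp⟩⟩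

/-- Orbits of tuples correspond to set partitions with at most `n` blocks. -/
def orbEquiv (m n : ℕ) :
    Quotient (orbS n m) ≃ {π : Setoid (Fin m) // Nat.card (Quotient π) ≤ n} :=
  Equiv.ofBijective
    (Quotient.lift (fun a => (⟨Setoid.ker a, ker_card_le a⟩ :
        {π : Setoid (Fin m) // Nat.card (Quotient π) ≤ n}))
      (fun a b hab => Subtype.ext ((exists_perm_iff a b).1 hab)))
    ⟨by
      rintro ⟨a⟩ ⟨b⟩ h
      exact Quotient.sound ((exists_perm_iff a b).2 (congrArg Subtype.val h)),
     by
      rintro ⟨π, hπ⟩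
      obtain ⟨a, ha⟩ := exists_ker_eq π hπ
      exact ⟨Quotient.mk _ a, Subtype.ext ha⟩⟩

/-- Pairs of `k`-tuples are `2k`-tuples, compatibly with the `S_n`-action. -/
def pairEquiv (n k : ℕ) : ((Fin k → Fin n) × (Fin k → Fin n)) ≃ (Fin (2 * k) → Fin n) :=
  (Equiv.sumArrowEquivProdArrow (Fin k) (Fin k) (Fin n)).symm.trans
    (Equiv.arrowCongr (finSumFinEquiv.trans (finCongr (two_mul k).symm)) (Equiv.refl (Fin n)))

theorem pairEquiv_comp (σ : Equiv.Perm (Fin n)) (I J : Fin k → Fin n) :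
    pairEquiv n k (⇑σ ∘ I, ⇑σ ∘ J) = ⇑σ ∘ pairEquiv n k (I, J) := by
  funext x
  show Sum.elim (⇑σ ∘ I) (⇑σ ∘ J) ((finSumFinEquiv.trans (finCongr (two_mul k).symm)).symm x)
    = σ (Sum.elim I J ((finSumFinEquiv.trans (finCongr (two_mul k).symm)).symm x))
  cases ((finSumFinEquiv.trans (finCongr (two_mul k).symm)).symm x) <;> rfl

theorem lift_wd (f : ↥(MEnd n k)) (a b : Fin (2 * k) → Fin n) (hab : (orbS n (2 * k)).r a b) :
    (f : _ → ℂ) ((pairEquiv n k).symm a) = (f : _ → ℂ) ((pairEquiv n k).symm b) := by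
  obtain ⟨σ, rfl⟩ := hab
  have hp : (pairEquiv n k).symm (⇑σ ∘ a) =
      (⇑σ ∘ ((pairEquiv n k).symm a).1, ⇑σ ∘ ((pairEquiv n k).symm a).2) := by
    rw [Equiv.symm_apply_eq, pairEquiv_comp]
    simp
  rw [hp]
  exact (f.2 σ _ _).symm

/-- Functions on the orbit space give equivariant matrices. -/
def mendL (n k : ℕ) : (Quotient (orbS n (2 * k)) → ℂ) →ₗ[ℂ] ↥(MEnd n k) where
  toFun g := ⟨fun p => g (Quotient.mk _ (pairEquiv n k p)), by
    intro σ I J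
    show g (Quotient.mk _ (pairEquiv n k (⇑σ ∘ I, ⇑σ ∘ J)))
      = g (Quotient.mk _ (pairEquiv n k (I, J)))
    rw [pairEquiv_comp]
    exact (congrArg g (Quotient.sound ⟨σ, rfl⟩)).symm⟩
  map_add' g h := rfl
  map_smul' c g := rfl

theorem mendL_bijective (n k : ℕ) : Function.Bijective (mendL n k) := by
  constructor
  · intro g g' h
    funext q
    refine Quotient.inductionOn q fun y => ?_
    have := congrFun (congrArg Subtype.val h) ((pairEquiv n k).symm y)
    simpa [mendL] using this
  · intro f
    refine ⟨Quotient.lift (fun y => (f : _ → ℂ) ((pairEquiv n k).symm y)) (lift_wd f), ?_⟩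
    apply Subtype.ext
    funext p
    simp [mendL]

/-- The space of equivariant matrices is isomorphic to functions on the orbit space. -/
def mendEquiv (n k : ℕ) : (Quotient (orbS n (2 * k)) → ℂ) ≃ₗ[ℂ] ↥(MEnd n k) :=
  LinearEquiv.ofBijective (mendL n k) (mendL_bijective n k)

end BellAux

/-- `dim End_{S_n}(M_n^{⊗k}) = Bell(2k, n)`. -/
theorem finrank_MEnd_eq_bell (k n : ℕ) (hn : 1 ≤ n) :
    Module.finrank ℂ ↥(MEnd n k) = Bell (2 * k) n := by
  classical
  have : Fintype (Quotient (BellAux.orbS n (2 * k))) := Fintype.ofFinite _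
  rw [← (BellAux.mendEquiv n k).finrank_eq, Module.finrank_pi, Bell,
    ← Nat.card_eq_fintype_card, Nat.card_congr (BellAux.orbEquiv (2 * k) n)]

end
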